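/- Let C be a Fraïssé class of finite relational structures and let Δ be its Fraïssé limit. Then C is a Ramsey class if and only if for all Ω_0, Ω_1 ∈ C and every coloring with two colors of the substructures of Δ isomorphic to Ω_0 there exists a substructure Ω_1' of Δ isomorphic to Ω_1 such that all substructures of Ω_1' isomorphic to Ω_0 have the same color. -/

import Mathlib

/-!
A Fraïssé class is Ramsey if and only if its Fraïssé limit has the corresponding coloring
property for substructures of the limit.
-/

open FirstOrder FirstOrder.Language

/-- The age of the structure `M`: the class of all finite structures that embed into `M`
(this represents, up to isomorphism, the class of finite substructures of `M`). -/
def ageOf (L : Language) (M : Type) [L.Structure M] :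
    Set (CategoryTheory.Bundled L.Structure) :=
  {N | Finite N ∧ Nonempty (N ↪[L] M)}

/-- `K` is a Ramsey class: for all `Ω₀, Ω₁ ∈ K` there is `Ω₂ ∈ K` such that for every
`2`-coloring of the substructures of `Ω₂` isomorphic to `Ω₀` there is a substructure of `Ω₂`
isomorphic to `Ω₁` inside which all substructures isomorphic to `Ω₀` get the same color. -/
def IsRamseyClass (L : Language) (K : Set (CategoryTheory.Bundled L.Structure)) : Prop :=
  ∀ Ω₀ ∈ K, ∀ Ω₁ ∈ K, ∃ Ω₂ ∈ K,
    ∀ χ : L.Substructure Ω₂ → Fin 2,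
      ∃ S₁ : L.Substructure Ω₂, Nonempty (Ω₁ ≃[L] S₁) ∧
        ∀ S S' : L.Substructure Ω₂, S ≤ S₁ → S' ≤ S₁ →
          Nonempty (Ω₀ ≃[L] S) → Nonempty (Ω₀ ≃[L] S') → χ S = χ S'

/-- `K` is a Fraïssé class of finite relational structures: a class of finite structures
closed under isomorphism and (induced) substructures which has the joint embedding property
and the amalgamation property. -/
def IsFraisseClass (L : Language) (K : Set (CategoryTheory.Bundled L.Structure)) : Prop :=
  -- all members are finite
  (∀ N ∈ K, Finite N) ∧
  -- closed under isomorphism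
  (∀ N ∈ K, ∀ P : CategoryTheory.Bundled L.Structure, Nonempty (P ≃[L] N) → P ∈ K) ∧
  -- closed under substructures (up to isomorphism: anything embedding into a member)
  (∀ N ∈ K, ∀ P : CategoryTheory.Bundled L.Structure,
    Finite P → Nonempty (P ↪[L] N) → P ∈ K) ∧
  -- joint embedding property
  (∀ N ∈ K, ∀ P ∈ K, ∃ Q ∈ K, Nonempty (N ↪[L] Q) ∧ Nonempty (P ↪[L] Q)) ∧
  -- amalgamation property
  (∀ Ω₀ Ω₁ Ω₂ : CategoryTheory.Bundled L.Structure,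
    Ω₀ ∈ K → Ω₁ ∈ K → Ω₂ ∈ K →
    ∀ (e : Ω₀ ↪[L] Ω₁) (f : Ω₀ ↪[L] Ω₂),
      ∃ (Ω₃ : CategoryTheory.Bundled L.Structure) (_ : Ω₃ ∈ K)
        (e' : Ω₁ ↪[L] Ω₃) (f' : Ω₂ ↪[L] Ω₃), e'.comp e = f'.comp f)

section Aux

variable {L : Language} {M : Type*} {N : Type*} [L.Structure M] [L.Structure N]

/-- Pulling back the pushforward of a substructure along an embedding recovers it. -/
lemma aux_comap_map (f : N ↪[L] M) (T : L.Substructure N) :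
    (T.map f.toHom).comap f.toHom = T := by
  ext x
  simp only [Substructure.mem_comap, Substructure.mem_map]
  constructor
  · rintro ⟨y, hy, hxy⟩
    have : y = x := f.injective hxy
    rwa [this] at hy
  · exact fun h => ⟨x, h, rfl⟩

/-- Pushing forward the pullback of a substructure contained in the range of an embedding
recovers it. -/
lemma aux_map_comap (f : N ↪[L] M) (S : L.Substructure M) (h : S ≤ f.toHom.range) :
    (S.comap f.toHom).map f.toHom = S := by
  ext x
  simp only [Substructure.mem_comap, Substructure.mem_map]
  constructor
  · rintro ⟨y, hy, rfl⟩; exact hy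
  · intro hx
    obtain ⟨y, rfl⟩ := Hom.mem_range.1 (h hx)
    exact ⟨y, hx, rfl⟩

end Aux


universe w in
/-- Any finite substructure of `M` has an isomorphic copy, in any universe,
inside the age of `M`. -/
lemma aux_lift_mem_age {L : Language} {M : Type} [L.Structure M] (S : L.Substructure M)
    (hS : Finite S) :
    ∃ P : CategoryTheory.Bundled.{w} L.Structure, P ∈ ageOf L M ∧ Nonempty (↥S ≃[L] ↥P) := by
  letI : L.Structure (ULift.{w} ↥S) := Equiv.inducedStructure Equiv.ulift.symm
  have e : ↥S ≃[L] ULift.{w} ↥S := Equiv.inducedStructureEquiv Equiv.ulift.symm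
  refine ⟨⟨ULift.{w} ↥S, inferInstance⟩, ⟨?_, ⟨S.subtype.comp e.symm.toEmbedding⟩⟩, ⟨e⟩⟩
  exact Finite.of_equiv _ e.toEquiv

/-- Let `K` be a Fraïssé class of finite relational structures (in a countable relational
language) and let `Δ = M` be its Fraïssé limit, i.e., the countable homogeneous structure
whose age is `K`. Then `K` is a Ramsey class if and only if for all `Ω₀, Ω₁ ∈ K` and every
`2`-coloring of the substructures of `Δ` isomorphic to `Ω₀` there is a substructure of `Δ`
isomorphic to `Ω₁` inside which all substructures isomorphic to `Ω₀` get the same color. -/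
theorem statement12 (L : Language) [L.IsRelational] [Countable (Σ i, L.Relations i)]
    (K : Set (CategoryTheory.Bundled L.Structure)) (hK : IsFraisseClass L K)
    (M : Type) [L.Structure M] [Countable M]
    (hhom : L.IsUltrahomogeneous M) (hage : ageOf L M = K) :
    IsRamseyClass L K ↔
      ∀ Ω₀ ∈ K, ∀ Ω₁ ∈ K, ∀ χ : L.Substructure M → Fin 2,
        ∃ S₁ : L.Substructure M, Nonempty (Ω₁ ≃[L] S₁) ∧
          ∀ S S' : L.Substructure M, S ≤ S₁ → S' ≤ S₁ →
            Nonempty (Ω₀ ≃[L] S) → Nonempty (Ω₀ ≃[L] S') → χ S = χ S' := by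
  classical
  constructor
  · -- Ramsey class ⇒ coloring property of the limit
    intro hR Ω₀ hΩ₀ Ω₁ hΩ₁ χ
    obtain ⟨Ω₂, hΩ₂, hram⟩ := hR Ω₀ hΩ₀ Ω₁ hΩ₁
    have hΩ₂age : (Ω₂ : CategoryTheory.Bundled L.Structure) ∈ ageOf L M := by
      rw [hage]; exact hΩ₂
    obtain ⟨-, ⟨g⟩⟩ := hΩ₂age
    obtain ⟨S₁, ⟨e₁⟩, hmono⟩ := hram (fun T => χ (T.map g.toHom))
    have hr : S₁.map g.toHom ≤ g.toHom.range := by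
      rintro x hx
      obtain ⟨y, -, rfl⟩ := Substructure.mem_map.1 hx
      exact Hom.mem_range.2 ⟨y, rfl⟩
    refine ⟨S₁.map g.toHom, ⟨(g.substructureEquivMap S₁).comp e₁⟩, ?_⟩
    rintro S S' hS hS' ⟨eS⟩ ⟨eS'⟩
    have heq : (S.comap g.toHom).map g.toHom = S := aux_map_comap g S (hS.trans hr)
    have heq' : (S'.comap g.toHom).map g.toHom = S' := aux_map_comap g S' (hS'.trans hr)
    have hle : S.comap g.toHom ≤ S₁ := by
      intro x hx
      have : g x ∈ S₁.map g.toHom := hS (Substructure.mem_comap.1 hx)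
      obtain ⟨y, hy, hyx⟩ := Substructure.mem_map.1 this
      rwa [← g.injective hyx]
    have hle' : S'.comap g.toHom ≤ S₁ := by
      intro x hx
      have : g x ∈ S₁.map g.toHom := hS' (Substructure.mem_comap.1 hx)
      obtain ⟨y, hy, hyx⟩ := Substructure.mem_map.1 this
      rwa [← g.injective hyx]
    have eC : Ω₀ ≃[L] (S.comap g.toHom) := by
      have e : Ω₀ ≃[L] ((S.comap g.toHom).map g.toHom) := by rw [heq]; exact eS
      exact ((g.substructureEquivMap (S.comap g.toHom)).symm).comp e
    have eC' : Ω₀ ≃[L] (S'.comap g.toHom) := by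
      have e : Ω₀ ≃[L] ((S'.comap g.toHom).map g.toHom) := by rw [heq']; exact eS'
      exact ((g.substructureEquivMap (S'.comap g.toHom)).symm).comp e
    have := hmono (S.comap g.toHom) (S'.comap g.toHom) hle hle' ⟨eC⟩ ⟨eC'⟩
    simp only [heq, heq'] at this
    exact this
  · -- coloring property of the limit ⇒ Ramsey class
    intro hP Ω₀ hΩ₀ Ω₁ hΩ₁
    by_contra hno
    push_neg at hno
    -- an enumeration of M by finite substructures
    obtain ⟨enc, henc⟩ := Countable.exists_injective_nat M
    set A : ℕ → L.Substructure M := fun n => Substructure.closure L (enc ⁻¹' Set.Iio n) with hA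
    have hAmem : ∀ n x, x ∈ A n ↔ enc x < n := by
      intro n x
      simp [hA, Substructure.mem_closure_iff_of_isRelational]
    have hAfin : ∀ n, Finite (A n) := by
      intro n
      have hsub : ((A n : Set M)) ⊆ enc ⁻¹' Set.Iio n := fun x hx => (hAmem n x).1 hx
      exact Set.Finite.to_subtype (((Set.finite_Iio n).preimage henc.injOn).subset hsub)
    -- lift each A n to a bundled structure in the right universe
    obtain ⟨B, hB, hBeq⟩ : ∃ B : ℕ → CategoryTheory.Bundled L.Structure,
        (∀ n, B n ∈ K) ∧ ∀ n, Nonempty (↥(A n) ≃[L] ↥(B n)) := by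
      choose B hBage hBeq using fun n => aux_lift_mem_age (A n) (hAfin n)
      exact ⟨B, fun n => hage ▸ hBage n, hBeq⟩
    have uEq : ∀ n, ↥(A n) ≃[L] ↥(B n) := fun n => (hBeq n).some
    set g : ∀ n, ↥(B n) ↪[L] M := fun n =>
      ((A n).subtype).comp (uEq n).symm.toEmbedding with hgdef
    choose χn hχn using fun n => hno _ (hB n)
    -- transfer the bad colorings to colorings of substructures of M
    set χ' : ℕ → L.Substructure M → Fin 2 :=
      fun n T => χn n (T.comap (g n).toHom) with hχ'
    -- combine them via an ultrafilter
    let U : Ultrafilter ℕ := Ultrafilter.of Filter.atTop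
    set χ : L.Substructure M → Fin 2 :=
      fun T => if {n | χ' n T = 0} ∈ U then 0 else 1 with hχ
    have hagree : ∀ T : L.Substructure M, {n | χ' n T = χ T} ∈ U := by
      intro T
      by_cases h : {n | χ' n T = 0} ∈ U
      · have h0 : χ T = 0 := by rw [hχ]; simp [h]
        rw [h0]; exact h
      · have h' : {n | χ' n T = 0}ᶜ ∈ U := Ultrafilter.compl_mem_iff_notMem.2 h
        have hT1 : χ T = 1 := by rw [hχ]; simp [h]
        rw [hT1]
        refine Filter.mem_of_superset h' fun n hn => ?_
        have hne : χ' n T ≠ 0 := hn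
        exact Fin.eq_one_of_ne_zero _ hne
    -- apply the coloring property of the limit to χ
    obtain ⟨S₁, ⟨e₁⟩, hmono⟩ := hP Ω₀ hΩ₀ Ω₁ hΩ₁ χ
    have hΩ₁fin : Finite Ω₁ := hK.1 Ω₁ hΩ₁
    have hS₁fin : Finite S₁ := Finite.of_equiv _ e₁.toEquiv
    have hS₁setfin : (S₁ : Set M).Finite := Set.toFinite _
    -- S₁ is contained in some A n₀
    obtain ⟨n₀, hn₀⟩ := (hS₁setfin.image enc).bddAbove
    have hS₁le : S₁ ≤ A (n₀ + 1) := by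
      intro x hx
      rw [hAmem]
      exact Nat.lt_succ_of_le (hn₀ ⟨x, hx, rfl⟩)
    -- the collection of substructures of S₁ is finite
    have hfincol : {T : L.Substructure M | T ≤ S₁}.Finite := by
      apply Set.Finite.of_finite_image (f := fun T : L.Substructure M => (T : Set M))
      · refine hS₁setfin.finite_subsets.subset ?_
        rintro _ ⟨T, hT, rfl⟩
        exact SetLike.coe_subset_coe.2 hT
      · exact SetLike.coe_injective.injOn
    -- find a single good index m
    have hUgood : ({n | n₀ + 1 ≤ n} ∩
        ⋂ T ∈ {T : L.Substructure M | T ≤ S₁}, {n | χ' n T = χ T}) ∈ U := by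
      apply Filter.inter_mem
      · exact Ultrafilter.of_le Filter.atTop (Filter.mem_atTop (n₀ + 1))
      · exact (Filter.biInter_mem hfincol).2 fun T _ => hagree T
    obtain ⟨m, hm₁, hm₂⟩ := Filter.nonempty_of_mem hUgood
    rw [Set.mem_iInter₂] at hm₂
    have hAm : S₁ ≤ A m := by
      refine hS₁le.trans fun x hx => ?_
      rw [hAmem] at hx ⊢
      exact lt_of_lt_of_le hx hm₁
    -- transfer S₁ into a substructure of B m
    set f : ↥(B m) ↪[L] M := g m with hf
    set S₁' : L.Substructure ↥(B m) := S₁.comap f.toHom with hS₁'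
    have hrange : S₁ ≤ f.toHom.range := by
      intro x hx
      refine Hom.mem_range.2 ⟨uEq m ⟨x, hAm hx⟩, ?_⟩
      show f (uEq m ⟨x, hAm hx⟩) = x
      rw [hf, hgdef]
      simp [Embedding.comp_apply]
    have heqS₁ : S₁'.map f.toHom = S₁ := aux_map_comap f S₁ hrange
    have eΩ₁ : Ω₁ ≃[L] S₁' := by
      have e : Ω₁ ≃[L] (S₁'.map f.toHom) := by rw [heqS₁]; exact e₁
      exact ((f.substructureEquivMap S₁').symm).comp e
    -- use badness of χn m
    obtain ⟨T, T', hT, hT', hTiso, hT'iso, hne⟩ := hχn m S₁' ⟨eΩ₁⟩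
    obtain ⟨eT⟩ := hTiso
    obtain ⟨eT'⟩ := hT'iso
    -- push forward the bad pair to M
    have hTm : T.map f.toHom ≤ S₁ := heqS₁ ▸ Substructure.monotone_map hT
    have hT'm : T'.map f.toHom ≤ S₁ := heqS₁ ▸ Substructure.monotone_map hT'
    have eTm : Ω₀ ≃[L] (T.map f.toHom) := (f.substructureEquivMap T).comp eT
    have eT'm : Ω₀ ≃[L] (T'.map f.toHom) := (f.substructureEquivMap T').comp eT'
    have hmonoEq := hmono (T.map f.toHom) (T'.map f.toHom) hTm hT'm ⟨eTm⟩ ⟨eT'm⟩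
    have h1 : χ (T.map f.toHom) = χn m T := by
      have hagr := hm₂ (T.map f.toHom) hTm
      simp only [hχ'] at hagr
      rw [← hagr, hf, aux_comap_map]
    have h2 : χ (T'.map f.toHom) = χn m T' := by
      have hagr := hm₂ (T'.map f.toHom) hT'm
      simp only [hχ'] at hagr
      rw [← hagr, hf, aux_comap_map]
    exact hne (h1 ▸ h2 ▸ hmonoEq)
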